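/- The separating operator of Example 1 satisfies condition A3: if g : ℝⁿ → ℝ is convex with K = {x : g(x) ≤ 0} nonempty, S(x) = K if x ∈ K and S(x) = {z : uₓᵀ(z − x) + g(x) ≤ 0} for some uₓ ∈ ∂g(x) otherwise, and zₖ → z* with dist(zₖ, S(zₖ)) → 0, then z* ∈ K. -/

import Mathlib

open Filter Topology
open scoped RealInnerProductSpace

theorem stmt_5 {n : ℕ} (g : EuclideanSpace ℝ (Fin n) → ℝ)
    (hg : ConvexOn ℝ Set.univ g)
    (K : Set (EuclideanSpace ℝ (Fin n))) (hK : K = {x | g x ≤ 0}) (hKne : K.Nonempty)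
    (u : EuclideanSpace ℝ (Fin n) → EuclideanSpace ℝ (Fin n))
    (hu : ∀ x ∉ K, ∀ y, g x + ⟪u x, y - x⟫ ≤ g y)
    (S : EuclideanSpace ℝ (Fin n) → Set (EuclideanSpace ℝ (Fin n)))
    (hS1 : ∀ x ∈ K, S x = K)
    (hS2 : ∀ x ∉ K, S x = {z | ⟪u x, z - x⟫ + g x ≤ 0})
    (z : ℕ → EuclideanSpace ℝ (Fin n)) (zstar : EuclideanSpace ℝ (Fin n))
    (hz : Tendsto z atTop (𝓝 zstar))
    (hdist : Tendsto (fun k => Metric.infDist (z k) (S (z k))) atTop (𝓝 0)) :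
    zstar ∈ K := by
  obtain ⟨y₀, hy₀⟩ := hKne
  have hgy₀ : g y₀ ≤ 0 := by rwa [hK] at hy₀
  -- continuity of g
  have hcont : Continuous g := by
    rw [← continuousOn_univ]
    exact hg.continuousOn isOpen_univ
  -- bound on g over closed ball of radius 2
  have hcpt : IsCompact (Metric.closedBall zstar 2) := isCompact_closedBall _ _
  obtain ⟨M, hM⟩ : ∃ M, ∀ w ∈ Metric.closedBall zstar 2, |g w| ≤ M := by
    obtain ⟨M, hM⟩ := (hcpt.image hcont).isBounded.subset_closedBall 0
    refine ⟨M, fun w hw => ?_⟩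
    have := hM (Set.mem_image_of_mem g hw)
    simpa [Real.dist_eq] using this
  have hM0 : 0 ≤ M := le_trans (abs_nonneg _) (hM zstar (by simp))
  -- key estimate: eventually g (z k) ≤ 2*M * infDist (z k) (S (z k))
  have hev : ∀ᶠ k in atTop, g (z k) ≤ 2 * M * Metric.infDist (z k) (S (z k)) := by
    filter_upwards [hz (Metric.closedBall_mem_nhds zstar one_pos)] with k hk
    have hd0 : 0 ≤ Metric.infDist (z k) (S (z k)) := Metric.infDist_nonneg
    by_cases hzk : z k ∈ K
    · have : g (z k) ≤ 0 := by rwa [hK] at hzk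
      nlinarith
    · -- z k ∉ K
      have hgz : 0 < g (z k) := by
        by_contra h
        exact hzk (by rw [hK]; exact Set.mem_setOf_eq ▸ le_of_not_gt h)
      have hsub := hu (z k) hzk
      -- u (z k) ≠ 0
      have hu0 : u (z k) ≠ 0 := by
        intro h
        have := hsub y₀
        rw [h] at this
        simp at this
        linarith
      have hnorm : 0 < ‖u (z k)‖ := norm_pos_iff.mpr hu0
      -- ‖u (z k)‖ ≤ 2 M : use test point z k + unit vector
      have hball : z k ∈ Metric.closedBall zstar 2 :=
        Metric.closedBall_subset_closedBall (by norm_num) hk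
      have hball2 : z k + ‖u (z k)‖⁻¹ • u (z k) ∈ Metric.closedBall zstar 2 := by
        have h1 : ‖‖u (z k)‖⁻¹ • u (z k)‖ = 1 := by
          rw [norm_smul, norm_inv, norm_norm, inv_mul_cancel₀ (ne_of_gt hnorm)]
        have : dist (z k + ‖u (z k)‖⁻¹ • u (z k)) zstar ≤
            dist (z k + ‖u (z k)‖⁻¹ • u (z k)) (z k) + dist (z k) zstar :=
          dist_triangle _ _ _
        have h2 : dist (z k + ‖u (z k)‖⁻¹ • u (z k)) (z k) = 1 := by
          simpa [dist_eq_norm] using h1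
        have h3 : dist (z k) zstar ≤ 1 := Metric.mem_closedBall.mp hk
        simp only [Metric.mem_closedBall]
        linarith
      have hub : ‖u (z k)‖ ≤ 2 * M := by
        have := hsub (z k + ‖u (z k)‖⁻¹ • u (z k))
        have hip : ⟪u (z k), (z k + ‖u (z k)‖⁻¹ • u (z k)) - z k⟫ = ‖u (z k)‖ := by
          rw [add_sub_cancel_left, real_inner_smul_right, real_inner_self_eq_norm_sq]
          field_simp
        rw [hip] at this
        have h1 := (abs_le.mp (hM _ hball2)).2
        have h2 := (abs_le.mp (hM _ hball)).1
        linarith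
      -- S (z k) is the halfspace; nonempty since y₀ ∈ it
      rw [hS2 (z k) hzk]
      have hy₀S : y₀ ∈ {w | ⟪u (z k), w - z k⟫ + g (z k) ≤ 0} := by
        have := hsub y₀
        simp only [Set.mem_setOf_eq]
        linarith
      -- for every w in the halfspace, g(z k) ≤ ‖u‖ * dist (z k) w
      have hle : g (z k) / ‖u (z k)‖ ≤
          Metric.infDist (z k) {w | ⟪u (z k), w - z k⟫ + g (z k) ≤ 0} := by
        by_contra hcon
        push_neg at hcon
        obtain ⟨w, hw, hwd⟩ := (Metric.infDist_lt_iff ⟨y₀, hy₀S⟩).mp hcon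
        refine absurd hwd (not_lt.mpr ?_)
        rw [div_le_iff₀ hnorm]
        have h1 : g (z k) ≤ ⟪u (z k), z k - w⟫ := by
          have := hw
          simp only [Set.mem_setOf_eq] at this
          have : ⟪u (z k), z k - w⟫ = -⟪u (z k), w - z k⟫ := by
            rw [← inner_neg_right]; congr 1; abel
          linarith [this ▸ (by linarith [hw] : g (z k) ≤ -⟪u (z k), w - z k⟫)]
        have h2 : ⟪u (z k), z k - w⟫ ≤ ‖u (z k)‖ * ‖z k - w‖ :=
          real_inner_le_norm _ _
        rw [dist_eq_norm]
        calc g (z k) ≤ ‖u (z k)‖ * ‖z k - w‖ := le_trans h1 h2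
          _ = ‖z k - w‖ * ‖u (z k)‖ := mul_comm _ _
      have hd0' : 0 ≤ Metric.infDist (z k) {w | ⟪u (z k), w - z k⟫ + g (z k) ≤ 0} :=
        Metric.infDist_nonneg
      rw [div_le_iff₀ hnorm] at hle
      calc g (z k) ≤ Metric.infDist (z k) _ * ‖u (z k)‖ := hle
        _ ≤ 2 * M * Metric.infDist (z k) _ := by nlinarith
  -- pass to the limit
  have h1 : Tendsto (fun k => g (z k)) atTop (𝓝 (g zstar)) := (hcont.tendsto _).comp hz
  have h2 : Tendsto (fun k => 2 * M * Metric.infDist (z k) (S (z k))) atTop (𝓝 0) := by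
    have := hdist.const_mul (2 * M)
    simpa using this
  have : g zstar ≤ 0 := le_of_tendsto_of_tendsto h1 h2 hev
  rwa [hK]
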